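/- Let G be a bipartite graph with parts V₁ of size m and V₂ of size n, where 2 ≤ m ≤ n. Then there exists a tree T with m leaves and two families F₁, F₂ of subtrees of T such that the bipartite intersection graph between F₁ and F₂ is isomorphic to G (i.e., there are bijections V₂ → F₁ and V₁ → F₂ under which adjacency corresponds exactly to nonempty intersection of subtrees). -/

import Mathlib

/-- `S` is a subtree of `T`: a nonempty set of vertices inducing a connected subgraph. -/
def IsSubtree {α : Type*} (T : SimpleGraph α) (S : Set α) : Prop :=
  S.Nonempty ∧ (T.induce S).Connected

section Star

variable (m : ℕ)

/-- The star graph on `Option (Fin m)` with center `none`. -/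
def starG : SimpleGraph (Option (Fin m)) where
  Adj v w := v ≠ w ∧ (v = none ∨ w = none)
  symm := ⟨fun v w h => ⟨h.1.symm, h.2.symm⟩⟩
  loopless := ⟨fun v h => h.1 rfl⟩

lemma starG_adj {v w : Option (Fin m)} :
    (starG m).Adj v w ↔ v ≠ w ∧ (v = none ∨ w = none) := Iff.rfl

lemma starG_preconnected : (starG m).Preconnected := by
  have key : ∀ v : Option (Fin m), (starG m).Reachable v none := by
    intro v
    rcases v with _ | j
    · exact SimpleGraph.Reachable.refl _
    · exact SimpleGraph.Adj.reachable ⟨by simp, Or.inr rfl⟩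
  intro v w
  exact (key v).trans (key w).symm

lemma starG_cycle_none (c : (starG m).Walk none none) (hc : c.IsCycle) : False := by
  cases c with
  | nil => exact hc.ne_nil rfl
  | cons h p =>
    rename_i a
    have ha : a ≠ none := fun hh => by
      subst hh; exact h.1 rfl
    cases p with
    | nil => exact ha rfl
    | cons h' q =>
      rename_i b
      have hb : b = none := by
        rcases h'.2 with h1 | h1
        · exact absurd h1 ha
        · exact h1
      subst hb
      -- c = none :: a :: none :: q, with q : Walk none none
      have hsup := hc.2
      simp only [SimpleGraph.Walk.support_cons, List.tail_cons] at hsup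
      -- hsup : (a :: q.support).Nodup with q.support = none :: _
      cases q with
      | nil =>
        have := hc.three_le_length
        simp [SimpleGraph.Walk.length_cons] at this
      | cons h'' r =>
        simp only [SimpleGraph.Walk.support_cons, List.nodup_cons] at hsup
        exact hsup.2.1 (SimpleGraph.Walk.end_mem_support r)

lemma starG_isTree (hm : 2 ≤ m) : (starG m).IsTree := by
  constructor
  · exact ⟨starG_preconnected m⟩
  · intro v c hc
    have hnone : none ∈ c.support := by
      cases c with
      | nil => exact absurd rfl hc.ne_nil
      | cons h p =>
        rename_i w
        rcases h.2 with h1 | h1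
        · subst h1; exact SimpleGraph.Walk.start_mem_support _
        · subst h1
          simp [SimpleGraph.Walk.support_cons]
    exact starG_cycle_none m (c.rotate none hnone) (hc.rotate hnone)

lemma starG_subtree_of_mem_none {S : Set (Option (Fin m))} (h0 : none ∈ S) :
    IsSubtree (starG m) S := by
  refine ⟨⟨none, h0⟩, ?_⟩
  have hne : Nonempty ↥S := ⟨⟨none, h0⟩⟩
  refine ⟨fun a b => ?_⟩
  have key : ∀ x : ↥S, ((starG m).induce S).Reachable x ⟨none, h0⟩ := by
      rintro ⟨x, hx⟩
      rcases eq_or_ne x none with rfl | hxn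
      · exact SimpleGraph.Reachable.refl _
      · exact SimpleGraph.Adj.reachable (by exact ⟨hxn, Or.inr rfl⟩)
  exact (key a).trans (key b).symm

lemma starG_subtree_singleton (x : Option (Fin m)) :
    IsSubtree (starG m) ({x} : Set (Option (Fin m))) := by
  refine ⟨⟨x, rfl⟩, ?_⟩
  have hne : Nonempty ↥({x} : Set (Option (Fin m))) := ⟨⟨x, rfl⟩⟩
  refine ⟨fun a b => ?_⟩
  obtain ⟨a, ha⟩ := a; obtain ⟨b, hb⟩ := b
  simp only [Set.mem_singleton_iff] at ha hb
  subst ha; subst hb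
  exact SimpleGraph.Reachable.refl _

end Star

/-- every bipartite graph with parts of sizes `2 ≤ m ≤ n` (given by the
cross-adjacency relation `E`) is realized as the bipartite intersection graph of two
families of subtrees of a tree with `m` leaves. -/
theorem stmt_14 (m n : ℕ) (hm : 2 ≤ m) (hmn : m ≤ n) (E : Fin m → Fin n → Prop) :
    ∃ (β : Type) (_ : Fintype β) (T : SimpleGraph β)
      (f₁ : Fin n → Set β) (f₂ : Fin m → Set β),
      T.IsTree ∧
      ({v | ({w | T.Adj v w} : Set β).ncard = 1} : Set β).ncard = m ∧
      (∀ i, IsSubtree T (f₁ i)) ∧ (∀ j, IsSubtree T (f₂ j)) ∧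
      (∀ j i, E j i ↔ (f₁ i ∩ f₂ j).Nonempty) := by
  refine ⟨Option (Fin m), inferInstance, starG m,
    fun i => insert none (Option.some '' {j | E j i}),
    fun j => {some j}, starG_isTree m hm, ?_, ?_, ?_, ?_⟩
  · -- leaf count
    have hset : ({v | ({w | (starG m).Adj v w} : Set (Option (Fin m))).ncard = 1}
        : Set (Option (Fin m))) = Set.range Option.some := by
      ext v
      rcases v with _ | j
      · simp only [Set.mem_setOf_eq]
        have hnb : {w | (starG m).Adj none w} = Set.range Option.some := by
          ext w
          rcases w with _ | k
          · simp [starG_adj]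
          · simp [starG_adj]
        rw [hnb]
        have : (Set.range (Option.some : Fin m → Option (Fin m))).ncard = m := by
          rw [← Set.image_univ, Set.ncard_image_of_injective _ (Option.some_injective _),
            Set.ncard_univ]
          simp
        rw [this]
        simp only [Set.mem_range, reduceCtorEq, exists_false, iff_false]
        omega
      · simp only [Set.mem_setOf_eq]
        have hnb : {w | (starG m).Adj (some j) w} = {none} := by
          ext w
          rcases w with _ | k
          · simp [starG_adj]
          · simp [starG_adj]
        rw [hnb]
        simp
    rw [hset, ← Set.image_univ, Set.ncard_image_of_injective _ (Option.some_injective _),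
      Set.ncard_univ]
    simp
  · intro i
    exact starG_subtree_of_mem_none m (Set.mem_insert _ _)
  · intro j
    exact starG_subtree_singleton m (some j)
  · intro j i
    constructor
    · intro h
      exact ⟨some j, ⟨Set.mem_insert_of_mem _ ⟨j, h, rfl⟩, rfl⟩⟩
    · rintro ⟨x, hx1, hx2⟩
      simp only [Set.mem_singleton_iff] at hx2
      subst hx2
      rcases hx1 with h | ⟨k, hk, hkk⟩
      · simp at h
      · have : k = j := Option.some_injective _ hkk
        subst this; exact hk
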